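/- arXiv:1711.09443 — 2 statements merged into one kernel-verified Lean document; each statement's English description precedes it below -/
import Mathlib

section
/- Let Π_0 = {ε_1 - ε_2, …, ε_{n-1} - ε_n, ε_n - ε_1 + δ} with the bilinear form extended by (δ, ε_i) = (δ, δ) = 0. Then for every odd root β = ε_i + mδ or β = -ε_i + mδ (m ∈ ℤ), there exists exactly one α ∈ Π_0 with (α, β) = -1 and exactly one α' ∈ Π_0 with (β, α') = 1. -/
lemma mysum {n : ℕ} (u v : Fin n → ℝ) :
    ∑ p, ∑ q, (if p = q then (0:ℝ) else -(u p * v q)) =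
      (∑ p, u p * v p) - (∑ p, u p) * (∑ q, v q) := by
  have h : ∀ p q : Fin n, (if p = q then (0:ℝ) else -(u p * v q)) =
      (if q = p then u p * v q else 0) - u p * v q := by
    intro p q; by_cases h : p = q <;> simp [h, eq_comm]
  simp only [h, Finset.sum_sub_distrib, Finset.sum_ite_eq, Finset.sum_ite_eq', Finset.mem_univ,
    if_true, Finset.sum_mul_sum]

lemma modfact (n : ℕ) (hn : 2 ≤ n) (i : ℕ) (hi : i < n) :
    (i + (n - 1)) % n = if i = 0 then n - 1 else i - 1 := by
  split
  · subst ‹i = 0›; simp [Nat.mod_eq_of_lt (by omega : n - 1 < n)]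
  · have h : i + (n - 1) = (i - 1) + n := by omega
    rw [h, Nat.add_mod_right, Nat.mod_eq_of_lt (by omega)]

lemma modfact2 (n : ℕ) (k : ℕ) (hk : k < n) :
    (k + 1) % n = if k + 1 = n then 0 else k + 1 := by
  split
  · rw [‹k + 1 = n›, Nat.mod_self]
  · exact Nat.mod_eq_of_lt (by omega)

lemma succ_eq_iff (n : ℕ) (hn : 2 ≤ n) (k i : ℕ) (hk : k < n) (hi : i < n) :
    (k + 1) % n = i ↔ k = (i + (n - 1)) % n := by
  rw [modfact n hn i hi, modfact2 n k hk]
  split_ifs <;> omega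

lemma succ_ne (n : ℕ) (hn : 2 ≤ n) (k : ℕ) (hk : k < n) : (k + 1) % n ≠ k := by
  rw [modfact2 n k hk]; split_ifs <;> omega

/-- Affine root data for `sl(1|n)^{(1)}`: vectors are pairs `(x, a)` representing
`x + a·δ`, where `δ` is orthogonal to everything.  For
`Π₀ = {ε_1 - ε_2, …, ε_{n-1} - ε_n, ε_n - ε_1 + δ}` and any odd root
`β = ±ε_i + mδ`, there is exactly one `α ∈ Π₀` with `(α, β) = -1` and exactly one
`α' ∈ Π₀` with `(β, α') = 1`. -/
theorem stmt_2 (n : ℕ) (hn : 2 ≤ n)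
    (B : ((Fin n → ℝ) × ℝ) → ((Fin n → ℝ) × ℝ) → ℝ)
    (hB : ∀ u v, B u v = ∑ i, ∑ j, if i = j then 0 else -(u.1 i * v.1 j))
    (ε : Fin n → ((Fin n → ℝ) × ℝ)) (hε : ∀ i, ε i = (Pi.single i 1, 0))
    (δv : (Fin n → ℝ) × ℝ) (hδ : δv = (0, 1))
    (π : Fin n → ((Fin n → ℝ) × ℝ))
    (hπ : ∀ k : Fin n, π k = ε k - ε ⟨((k : ℕ) + 1) % n, Nat.mod_lt _ (by omega)⟩ +
        (if (k : ℕ) = n - 1 then δv else 0)) :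
    ∀ (i : Fin n) (m : ℤ) (β : (Fin n → ℝ) × ℝ),
      (β = ε i + (m : ℝ) • δv ∨ β = -(ε i) + (m : ℝ) • δv) →
      (∃! k : Fin n, B (π k) β = -1) ∧ (∃! k' : Fin n, B β (π k') = 1) := by
  intro i m β hβ
  -- the first component of β is c • Pi.single i 1 with c = ±1
  obtain ⟨c, hc, hβ1⟩ : ∃ c : ℝ, (c = 1 ∨ c = -1) ∧ β.1 = c • (Pi.single i 1 : Fin n → ℝ) := by
    rcases hβ with h | h <;> subst h
    · exact ⟨1, Or.inl rfl, by simp [hε, hδ]⟩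
    · exact ⟨-1, Or.inr rfl, by simp [hε, hδ]⟩
  -- first component of π k
  have hπ1 : ∀ k : Fin n, (π k).1 =
      Pi.single k 1 - Pi.single (⟨((k : ℕ) + 1) % n, Nat.mod_lt _ (by omega)⟩ : Fin n) 1 := by
    intro k
    rw [hπ k]
    rcases eq_or_ne (k : ℕ) (n - 1) with h | h <;> simp [hε, hδ, h]
  -- symmetry
  have hsymm : ∀ u v, B u v = B v u := by
    intro u v
    rw [hB, hB, mysum, mysum]
    simp [mul_comm]
  -- the key value computation
  have hval : ∀ k : Fin n, B (π k) β =
      c * ((if (i : ℕ) = (k : ℕ) then 1 else 0) -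
        (if (i : ℕ) = ((k : ℕ) + 1) % n then 1 else 0)) := by
    intro k
    have hsum1 : ∀ a : Fin n, (∑ p, (Pi.single a 1 : Fin n → ℝ) p) = 1 := by
      intro a; simp [Pi.single_apply]
    have hsum2 : ∀ a : Fin n, (∑ p, (Pi.single a 1 : Fin n → ℝ) p * (c • (Pi.single i 1 : Fin n → ℝ)) p)
        = if (i : ℕ) = (a : ℕ) then c else 0 := by
      intro a
      simp only [Pi.smul_apply, smul_eq_mul, Pi.single_apply, ite_mul, one_mul, zero_mul,
        mul_ite, mul_one, mul_zero, Finset.sum_ite_eq', Finset.mem_univ, if_true]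
      split_ifs with h1 h2 <;> simp_all [Fin.ext_iff]
    rw [hB, mysum, hπ1, hβ1]
    simp only [Pi.sub_apply, sub_mul, Finset.sum_sub_distrib, hsum1, hsum2, sub_self, zero_mul,
      sub_zero, Fin.val_mk]
    rcases eq_or_ne ((i : ℕ)) ((k : ℕ)) with h1 | h1 <;>
      rcases eq_or_ne ((i : ℕ)) (((k : ℕ) + 1) % n) with h2 | h2 <;>
      simp [h1, h2] <;> split_ifs <;> ring
  have hlt : ((i : ℕ) + (n - 1)) % n < n := Nat.mod_lt _ (by omega)
  set pd : Fin n := ⟨((i : ℕ) + (n - 1)) % n, hlt⟩ with hpd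
  have hsn : ∀ k : Fin n, ((k : ℕ) + 1) % n ≠ (k : ℕ) := fun k => succ_ne n hn _ k.isLt
  rcases hc with rfl | rfl
  · constructor
    · have hchar : ∀ k : Fin n, B (π k) β = -1 ↔ ((k : ℕ) + 1) % n = (i : ℕ) := by
        intro k
        rw [hval k]
        have := hsn k
        split_ifs with h1 h2 <;> norm_num <;> omega
      refine ⟨pd, (hchar pd).2 ?_, fun k hk => Fin.ext ?_⟩
      · exact (succ_eq_iff n hn _ _ pd.isLt i.isLt).mpr rfl
      · exact (succ_eq_iff n hn _ _ k.isLt i.isLt).mp ((hchar k).1 hk)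
    · have hchar : ∀ k : Fin n, B β (π k) = 1 ↔ (i : ℕ) = (k : ℕ) := by
        intro k
        rw [hsymm, hval k]
        have := hsn k
        split_ifs with h1 h2 <;> norm_num <;> omega
      exact ⟨i, (hchar i).2 rfl, fun k hk => Fin.ext ((hchar k).1 hk).symm⟩
  · constructor
    · have hchar : ∀ k : Fin n, B (π k) β = -1 ↔ (i : ℕ) = (k : ℕ) := by
        intro k
        rw [hval k]
        have := hsn k
        split_ifs with h1 h2 <;> norm_num <;> omega
      exact ⟨i, (hchar i).2 rfl, fun k hk => Fin.ext ((hchar k).1 hk).symm⟩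
    · have hchar : ∀ k : Fin n, B β (π k) = 1 ↔ ((k : ℕ) + 1) % n = (i : ℕ) := by
        intro k
        rw [hsymm, hval k]
        have := hsn k
        split_ifs with h1 h2 <;> norm_num <;> omega
      refine ⟨pd, (hchar pd).2 ?_, fun k hk => Fin.ext ?_⟩
      · exact (succ_eq_iff n hn _ _ pd.isLt i.isLt).mpr rfl
      · exact (succ_eq_iff n hn _ _ k.isLt i.isLt).mp ((hchar k).1 hk)
end

section
/- Let g be a Lie superalgebra, x ∈ g_{1̄} with [x,x] = 0, and let N_1, N_2 be g-modules. Then the canonical map Ker_{N_1}(x) ⊗ Ker_{N_2}(x) → N_1 ⊗ N_2 induces an isomorphism F_x(N_1) ⊗ F_x(N_2) ≅ F_x(N_1 ⊗ N_2), where x acts on N_1 ⊗ N_2 by the super-Leibniz rule. -/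
open TensorProduct

lemma exists_pseudoinv {K V : Type} [Field K] [AddCommGroup V] [Module K V]
    (X : V →ₗ[K] V) : ∃ g : V →ₗ[K] V, ∀ v, X (g (X v)) = X v := by
  obtain ⟨s, hs⟩ := (X.rangeRestrict).exists_rightInverse_of_surjective
    (LinearMap.range_eq_top.mpr X.surjective_rangeRestrict)
  obtain ⟨pr, hpr⟩ := (LinearMap.range X).subtype.exists_leftInverse_of_injective
    (Submodule.ker_subtype _)
  refine ⟨s ∘ₗ pr, fun v => ?_⟩
  have h1 : pr (X v) = ⟨X v, LinearMap.mem_range_self X v⟩ := by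
    have := LinearMap.congr_fun hpr ⟨X v, LinearMap.mem_range_self X v⟩
    simpa using this
  have h2 : ∀ y : LinearMap.range X, X (s y) = y := fun y => by
    have := LinearMap.congr_fun hs y
    simpa [LinearMap.rangeRestrict, Subtype.ext_iff] using this
  simp [LinearMap.comp_apply, h1, h2]

lemma exists_homotopy {K V : Type} [Field K] [AddCommGroup V] [Module K V]
    (X : V →ₗ[K] V) (hXX : ∀ v, X (X v) = 0) :
    ∃ p h : V →ₗ[K] V, (∀ v, X (h v) + h (X v) = v - p v) ∧ (∀ v, X (p v) = 0)
      ∧ (∀ v, p (X v) = 0) := by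
  obtain ⟨g, hg⟩ := exists_pseudoinv X
  refine ⟨LinearMap.id - X ∘ₗ g - g ∘ₗ X, g, fun v => ?_, fun v => ?_, fun v => ?_⟩
  · simp [LinearMap.sub_apply, LinearMap.comp_apply]; abel
  · simp [LinearMap.sub_apply, LinearMap.comp_apply, hXX, hg]
  · simp [LinearMap.sub_apply, LinearMap.comp_apply, hXX, hg]

lemma exists_homotopy_equiv {K V : Type} [Field K] [AddCommGroup V] [Module K V]
    (X σ : V →ₗ[K] V) (hXX : ∀ v, X (X v) = 0)
    (hσσ : ∀ v, σ (σ v) = v) (hσX : ∀ v, σ (X v) = -(X (σ v)))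
    (h2 : (2 : K) ≠ 0) :
    ∃ p h : V →ₗ[K] V, (∀ v, X (h v) + h (X v) = v - p v) ∧ (∀ v, X (p v) = 0)
      ∧ (∀ v, p (X v) = 0) ∧ (∀ v, σ (p v) = p (σ v)) ∧ (∀ v, σ (h v) = -(h (σ v))) := by
  obtain ⟨p₀, h₀, hh₀, hXp₀, hp₀X⟩ := exists_homotopy X hXX
  set c := (2 : K)⁻¹ with hc
  have hcc : c * 2 = 1 := inv_mul_cancel₀ h2
  have hXσ : ∀ v, X (σ v) = -(σ (X v)) := fun v => by rw [hσX, neg_neg]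
  refine ⟨c • (p₀ + σ ∘ₗ p₀ ∘ₗ σ), c • (h₀ - σ ∘ₗ h₀ ∘ₗ σ),
    fun v => ?_, fun v => ?_, fun v => ?_, fun v => ?_, fun v => ?_⟩
  · simp only [LinearMap.smul_apply, LinearMap.add_apply, LinearMap.sub_apply,
      LinearMap.comp_apply, map_smul, map_sub, map_add]
    have e2 : σ (X (h₀ (σ v))) + σ (h₀ (X (σ v))) = v - σ (p₀ (σ v)) := by
      rw [← map_add, hh₀ (σ v), map_sub, hσσ]
    have e3 : h₀ (σ (X v)) = -(h₀ (X (σ v))) := by rw [hσX, map_neg]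
    have e4 : X (σ (h₀ (σ v))) = -(σ (X (h₀ (σ v)))) := hXσ _
    rw [e3, e4, map_neg σ]
    have e1 := hh₀ v
    have : (X (h₀ v) + h₀ (X v)) + (σ (X (h₀ (σ v))) + σ (h₀ (X (σ v))))
        = (v + v) - (p₀ v + σ (p₀ (σ v))) := by rw [e1, e2]; abel
    calc c • (X (h₀ v) - -σ (X (h₀ (σ v)))) + c • (h₀ (X v) - -σ (h₀ (X (σ v))))
        = c • ((X (h₀ v) + h₀ (X v)) + (σ (X (h₀ (σ v))) + σ (h₀ (X (σ v))))) := by module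
      _ = c • (v + v - (p₀ v + σ (p₀ (σ v)))) := by rw [this]
      _ = v - c • (p₀ v + σ (p₀ (σ v))) := by
          rw [smul_sub, ← two_smul K v, smul_smul, hcc, one_smul]
  · simp only [LinearMap.smul_apply, LinearMap.add_apply, LinearMap.comp_apply, map_smul, map_add]
    rw [hXp₀ v, hXσ (p₀ (σ v)), hXp₀ (σ v)]
    simp
  · simp only [LinearMap.smul_apply, LinearMap.add_apply, LinearMap.comp_apply, map_smul, map_add]
    rw [hp₀X v, hσX v, map_neg p₀, map_neg σ, hp₀X (σ v)]
    simp
  · simp only [LinearMap.smul_apply, LinearMap.add_apply, LinearMap.comp_apply, map_smul, map_add,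
      hσσ]
    rw [add_comm]
  · simp only [LinearMap.smul_apply, LinearMap.sub_apply, LinearMap.comp_apply, map_smul, map_sub,
      hσσ]
    module

/-- The Duflo–Serganova space `F_x(N) = Ker_N x / Im_N x` of an odd square-zero
operator. -/
def DS {K M : Type*} [Field K] [AddCommGroup M] [Module K M] (X : M →ₗ[K] M) :=
  LinearMap.ker X ⧸ (LinearMap.range X).comap (LinearMap.ker X).subtype

noncomputable instance {K M : Type*} [Field K] [AddCommGroup M] [Module K M]
    (X : M →ₗ[K] M) : AddCommGroup (DS X) :=
  Submodule.Quotient.addCommGroup _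

noncomputable instance {K M : Type*} [Field K] [AddCommGroup M] [Module K M]
    (X : M →ₗ[K] M) : Module K (DS X) :=
  Submodule.Quotient.module _

lemma key {K N₁ N₂ : Type} [Field K]
    [AddCommGroup N₁] [Module K N₁] [AddCommGroup N₂] [Module K N₂]
    (X₁ : N₁ →ₗ[K] N₁) (X₂ : N₂ →ₗ[K] N₂) (σ : N₁ →ₗ[K] N₁)
    (hσσ : ∀ v, σ (σ v) = v) (hσX : ∀ v, σ (X₁ v) = -(X₁ (σ v)))
    (X : N₁ ⊗[K] N₂ →ₗ[K] N₁ ⊗[K] N₂)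
    (hX : X = TensorProduct.map X₁ LinearMap.id + TensorProduct.map σ X₂)
    (p₁ : N₁ →ₗ[K] N₁) (p₂ : N₂ →ₗ[K] N₂)
    (hXp₁ : ∀ v, X₁ (p₁ v) = 0) (hp₁X : ∀ v, p₁ (X₁ v) = 0)
    (hXp₂ : ∀ w, X₂ (p₂ w) = 0) (hp₂X : ∀ w, p₂ (X₂ w) = 0)
    (hb₁ : ∀ v, X₁ v = 0 → v - p₁ v ∈ LinearMap.range X₁)
    (hb₂ : ∀ w, X₂ w = 0 → w - p₂ w ∈ LinearMap.range X₂)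
    (hc : ∀ z, X z = 0 → z - TensorProduct.map p₁ p₂ z ∈ LinearMap.range X) :
    ∃ Φ : (DS X₁ ⊗[K] DS X₂) ≃ₗ[K] DS X,
      ∀ (v : N₁) (w : N₂) (hv : v ∈ LinearMap.ker X₁) (hw : w ∈ LinearMap.ker X₂)
        (hvw : v ⊗ₜ[K] w ∈ LinearMap.ker X),
        Φ (Submodule.Quotient.mk (⟨v, hv⟩ : LinearMap.ker X₁) ⊗ₜ[K]
            Submodule.Quotient.mk (⟨w, hw⟩ : LinearMap.ker X₂)) =
          Submodule.Quotient.mk (⟨v ⊗ₜ[K] w, hvw⟩ : LinearMap.ker X) := by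
  have hXσ : ∀ v, X₁ (σ v) = -(σ (X₁ v)) := fun v => by rw [hσX, neg_neg]
  have hXtmul : ∀ (u : N₁) (w : N₂), X (u ⊗ₜ[K] w) = X₁ u ⊗ₜ[K] w + σ u ⊗ₜ[K] X₂ w := by
    intro u w; rw [hX]; simp
  have hkermem : ∀ (v : N₁) (w : N₂), X₁ v = 0 → X₂ w = 0 → X (v ⊗ₜ[K] w) = 0 := by
    intro v w hv hw; rw [hXtmul, hv, hw]; simp
  set K1 := LinearMap.ker X₁ with hK1def
  set J1 := (LinearMap.range X₁).comap K1.subtype with hJ1def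
  set K2 := LinearMap.ker X₂ with hK2def
  set J2 := (LinearMap.range X₂).comap K2.subtype with hJ2def
  set Kt := LinearMap.ker X with hKtdef
  set Jt := (LinearMap.range X).comap Kt.subtype with hJtdef
  let ρ₁ : N₁ →ₗ[K] K1 :=
    LinearMap.codRestrict K1 p₁ (fun v => LinearMap.mem_ker.mpr (hXp₁ v))
  let ρ₂ : N₂ →ₗ[K] K2 :=
    LinearMap.codRestrict K2 p₂ (fun w => LinearMap.mem_ker.mpr (hXp₂ w))
  let π₁ : N₁ →ₗ[K] DS X₁ := J1.mkQ ∘ₗ ρ₁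
  let π₂ : N₂ →ₗ[K] DS X₂ := J2.mkQ ∘ₗ ρ₂
  let Ψ₀ : N₁ ⊗[K] N₂ →ₗ[K] DS X₁ ⊗[K] DS X₂ := TensorProduct.map π₁ π₂
  have hπ₁X : ∀ v, π₁ (X₁ v) = 0 := by
    intro v
    have h0 : ρ₁ (X₁ v) = 0 := Subtype.ext (by simp [ρ₁, hp₁X v])
    exact (congrArg J1.mkQ h0).trans (map_zero _)
  have hπ₂X : ∀ w, π₂ (X₂ w) = 0 := by
    intro w
    have h0 : ρ₂ (X₂ w) = 0 := Subtype.ext (by simp [ρ₂, hp₂X w])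
    exact (congrArg J2.mkQ h0).trans (map_zero _)
  have hΨ₀X : ∀ z, Ψ₀ (X z) = 0 := by
    have h : Ψ₀ ∘ₗ X = 0 := TensorProduct.ext' (fun u w => by
      simp only [LinearMap.comp_apply, LinearMap.zero_apply, hXtmul, map_add, Ψ₀,
        TensorProduct.map_tmul, hπ₁X, hπ₂X]
      simp)
    exact fun z => LinearMap.congr_fun h z
  let Ψ : DS X →ₗ[K] DS X₁ ⊗[K] DS X₂ :=
    Jt.liftQ (Ψ₀ ∘ₗ Kt.subtype) (by
      rintro ⟨v, hv⟩ hmem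
      rw [Submodule.mem_comap] at hmem
      obtain ⟨u, hu⟩ := hmem
      simp only [LinearMap.mem_ker, LinearMap.comp_apply, Submodule.coe_subtype]
      rw [show v = X u from hu.symm ▸ rfl]
      exact hΨ₀X u)
  have hΨmk : ∀ (z : N₁ ⊗[K] N₂) (hz : z ∈ Kt),
      Ψ (Submodule.Quotient.mk ⟨z, hz⟩) = Ψ₀ z := by
    intro z hz
    rfl
  let θ : K1 ⊗[K] K2 →ₗ[K] N₁ ⊗[K] N₂ := TensorProduct.map K1.subtype K2.subtype
  have hθ : ∀ z, θ z ∈ Kt := by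
    intro z
    induction z using TensorProduct.induction_on with
    | zero => simp
    | tmul v w =>
        simp only [θ, TensorProduct.map_tmul, Submodule.coe_subtype]
        exact LinearMap.mem_ker.mpr
          (hkermem v w (LinearMap.mem_ker.mp v.2) (LinearMap.mem_ker.mp w.2))
    | add a b ha hb => rw [map_add]; exact Kt.add_mem ha hb
  let F : K1 ⊗[K] K2 →ₗ[K] DS X := Jt.mkQ ∘ₗ LinearMap.codRestrict Kt θ hθ
  have hF : ∀ (a : ↥K1) (b : ↥K2) (hm : (a : N₁) ⊗ₜ[K] (b : N₂) ∈ Kt),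
      F (a ⊗ₜ[K] b) = Submodule.Quotient.mk ⟨(a : N₁) ⊗ₜ[K] (b : N₂), hm⟩ := by
    intro a b hm
    have : LinearMap.codRestrict Kt θ hθ (a ⊗ₜ[K] b) = ⟨(a : N₁) ⊗ₜ[K] (b : N₂), hm⟩ :=
      Subtype.ext (by simp [θ])
    simp only [F, LinearMap.comp_apply, this]
    rfl
  have hW : (LinearMap.range (TensorProduct.map J1.subtype LinearMap.id) ⊔
      LinearMap.range (TensorProduct.map LinearMap.id J2.subtype)) ≤ LinearMap.ker F := by
    apply sup_le
    · rintro z ⟨y, rfl⟩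
      induction y using TensorProduct.induction_on with
      | zero => simp
      | tmul j w =>
          rw [LinearMap.mem_ker, TensorProduct.map_tmul, LinearMap.id_apply,
            hF _ _ (by
              exact LinearMap.mem_ker.mpr (hkermem _ _
                (LinearMap.mem_ker.mp (j : ↥K1).2) (LinearMap.mem_ker.mp w.2)))]
          refine (Submodule.Quotient.mk_eq_zero Jt).mpr ?_
          obtain ⟨u, hu⟩ := (Submodule.mem_comap.mp j.2 : ((j : ↥K1) : N₁) ∈ LinearMap.range X₁)
          rw [Submodule.mem_comap]
          refine ⟨u ⊗ₜ[K] (w : N₂), ?_⟩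
          have hXuw : X (u ⊗ₜ[K] (w : N₂)) = ((j : ↥K1) : N₁) ⊗ₜ[K] (w : N₂) := by
            rw [hXtmul, hu, LinearMap.mem_ker.mp w.2]
            simp
          simpa using hXuw
      | add a b ha hb => rw [map_add]; exact add_mem ha hb
    · rintro z ⟨y, rfl⟩
      induction y using TensorProduct.induction_on with
      | zero => simp
      | tmul v j =>
          rw [LinearMap.mem_ker, TensorProduct.map_tmul, LinearMap.id_apply,
            hF _ _ (by
              exact LinearMap.mem_ker.mpr (hkermem _ _
                (LinearMap.mem_ker.mp v.2) (LinearMap.mem_ker.mp (j : ↥K2).2)))]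
          refine (Submodule.Quotient.mk_eq_zero Jt).mpr ?_
          obtain ⟨u, hu⟩ := (Submodule.mem_comap.mp j.2 : ((j : ↥K2) : N₂) ∈ LinearMap.range X₂)
          rw [Submodule.mem_comap]
          refine ⟨σ (v : N₁) ⊗ₜ[K] u, ?_⟩
          have h0 : X₁ (σ (v : N₁)) = 0 := by
            rw [hXσ, LinearMap.mem_ker.mp v.2, map_zero, neg_zero]
          have hXuw : X (σ (v : N₁) ⊗ₜ[K] u) = (v : N₁) ⊗ₜ[K] ((j : ↥K2) : N₂) := by
            rw [hXtmul, hσσ, h0, hu]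
            simp
          simpa using hXuw
      | add a b ha hb => rw [map_add]; exact add_mem ha hb
  let Φ' : DS X₁ ⊗[K] DS X₂ →ₗ[K] DS X :=
    (Submodule.liftQ _ F hW) ∘ₗ
      (TensorProduct.quotientTensorQuotientEquiv J1 J2).toLinearMap
  have hΦ'mk : ∀ (v : N₁) (w : N₂) (hv : v ∈ K1) (hw : w ∈ K2) (hm : v ⊗ₜ[K] w ∈ Kt),
      Φ' (Submodule.Quotient.mk ⟨v, hv⟩ ⊗ₜ[K] Submodule.Quotient.mk ⟨w, hw⟩) =
        Submodule.Quotient.mk ⟨v ⊗ₜ[K] w, hm⟩ := by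
    intro v w hv hw hm
    have e1 : (TensorProduct.quotientTensorQuotientEquiv J1 J2)
        ((Submodule.Quotient.mk (⟨v, hv⟩ : ↥K1)) ⊗ₜ[K] (Submodule.Quotient.mk (⟨w, hw⟩ : ↥K2)))
        = Submodule.Quotient.mk ((⟨v, hv⟩ : ↥K1) ⊗ₜ[K] (⟨w, hw⟩ : ↥K2)) :=
      TensorProduct.quotientTensorQuotientEquiv_apply_tmul_mk_tmul_mk J1 J2 _ _
    simp only [Φ', LinearMap.comp_apply, LinearEquiv.coe_coe, e1, Submodule.liftQ_apply]
    exact hF _ _ hm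
  have hP : ∀ z, TensorProduct.map p₁ p₂ z ∈ Kt := by
    intro z
    induction z using TensorProduct.induction_on with
    | zero => simp
    | tmul u w =>
        rw [TensorProduct.map_tmul]
        exact LinearMap.mem_ker.mpr (hkermem _ _ (hXp₁ u) (hXp₂ w))
    | add a b ha hb => rw [map_add]; exact Kt.add_mem ha hb
  have hQ : ∀ z, Φ' (Ψ₀ z) = Submodule.Quotient.mk ⟨TensorProduct.map p₁ p₂ z, hP z⟩ := by
    intro z
    induction z using TensorProduct.induction_on with
    | zero =>
        rw [map_zero, map_zero]
        symm
        rw [show (⟨TensorProduct.map p₁ p₂ 0, hP 0⟩ : ↥Kt) = 0 from Subtype.ext (by simp)]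
        exact Submodule.Quotient.mk_zero _
    | tmul u w =>
        have e0 : Ψ₀ (u ⊗ₜ[K] w) =
            (Submodule.Quotient.mk (ρ₁ u) : DS X₁) ⊗ₜ[K] (Submodule.Quotient.mk (ρ₂ w) : DS X₂) := rfl
        rw [e0]
        have e1 := hΦ'mk (p₁ u) (p₂ w) (LinearMap.mem_ker.mpr (hXp₁ u))
          (LinearMap.mem_ker.mpr (hXp₂ w))
          (LinearMap.mem_ker.mpr (hkermem _ _ (hXp₁ u) (hXp₂ w)))
        rw [show (ρ₁ u : ↥K1) = ⟨p₁ u, LinearMap.mem_ker.mpr (hXp₁ u)⟩ from rfl,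
          show (ρ₂ w : ↥K2) = ⟨p₂ w, LinearMap.mem_ker.mpr (hXp₂ w)⟩ from rfl]
        refine e1.trans ?_
        congr 1
    | add a b ha hb =>
        rw [map_add, map_add, ha, hb]
        refine (Submodule.Quotient.mk_add Jt).symm.trans ?_
        congr 1
        exact Subtype.ext (by simp)
  have comp1 : Φ' ∘ₗ Ψ = LinearMap.id := by
    apply Submodule.linearMap_qext
    ext ⟨z, hz⟩
    show Φ' (Ψ₀ z) = Submodule.Quotient.mk ⟨z, hz⟩
    rw [hQ z]
    refine (Submodule.Quotient.eq Jt).mpr ?_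
    have := hc z (LinearMap.mem_ker.mp hz)
    rw [Submodule.mem_comap]
    simpa using Submodule.neg_mem _ this
  have hmkρ₁ : ∀ (v : N₁) (hv : v ∈ K1),
      (Submodule.Quotient.mk (ρ₁ v) : DS X₁) = Submodule.Quotient.mk ⟨v, hv⟩ := by
    intro v hv
    refine (Submodule.Quotient.eq J1).mpr ?_
    rw [Submodule.mem_comap]
    simpa [ρ₁] using Submodule.neg_mem _ (hb₁ v (LinearMap.mem_ker.mp hv))
  have hmkρ₂ : ∀ (w : N₂) (hw : w ∈ K2),
      (Submodule.Quotient.mk (ρ₂ w) : DS X₂) = Submodule.Quotient.mk ⟨w, hw⟩ := by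
    intro w hw
    refine (Submodule.Quotient.eq J2).mpr ?_
    rw [Submodule.mem_comap]
    simpa [ρ₂] using Submodule.neg_mem _ (hb₂ w (LinearMap.mem_ker.mp hw))
  have comp2 : Ψ ∘ₗ Φ' = LinearMap.id := by
    apply TensorProduct.ext'
    intro a b
    obtain ⟨⟨v, hv⟩, rfl⟩ := Submodule.Quotient.mk_surjective _ a
    obtain ⟨⟨w, hw⟩, rfl⟩ := Submodule.Quotient.mk_surjective _ b
    have hm : v ⊗ₜ[K] w ∈ Kt :=
      LinearMap.mem_ker.mpr (hkermem v w (LinearMap.mem_ker.mp hv) (LinearMap.mem_ker.mp hw))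
    rw [LinearMap.comp_apply, hΦ'mk v w hv hw hm, LinearMap.id_apply]
    rw [show Ψ (Submodule.Quotient.mk ⟨v ⊗ₜ[K] w, hm⟩) = Ψ₀ (v ⊗ₜ[K] w) from rfl]
    have e0 : Ψ₀ (v ⊗ₜ[K] w) =
        (Submodule.Quotient.mk (ρ₁ v) : DS X₁) ⊗ₜ[K] (Submodule.Quotient.mk (ρ₂ w) : DS X₂) := rfl
    rw [e0, hmkρ₁ v hv, hmkρ₂ w hw]
    rfl
  refine ⟨LinearEquiv.ofLinear Φ' Ψ comp1 comp2, fun v w hv hw hvw => ?_⟩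
  exact hΦ'mk v w hv hw hvw

/-- Tensor property of the Duflo–Serganova functor: for square-zero odd operators
`X₁, X₂` on `N₁, N₂` (with parity operator `σ` on `N₁`), the operator
`X = X₁ ⊗ 1 + σ ⊗ X₂` given by the super-Leibniz rule satisfies
`F_x(N₁) ⊗ F_x(N₂) ≅ F_x(N₁ ⊗ N₂)` via the canonical map
`Ker X₁ ⊗ Ker X₂ → N₁ ⊗ N₂`. -/
theorem stmt_9 (K N₁ N₂ : Type) [Field K]
    [AddCommGroup N₁] [Module K N₁] [AddCommGroup N₂] [Module K N₂]
    (X₁ : N₁ →ₗ[K] N₁) (X₂ : N₂ →ₗ[K] N₂) (σ : N₁ →ₗ[K] N₁)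
    (h1 : X₁ ∘ₗ X₁ = 0) (h2 : X₂ ∘ₗ X₂ = 0) (hσ : σ ∘ₗ σ = LinearMap.id)
    (hσX : σ ∘ₗ X₁ = -(X₁ ∘ₗ σ))
    (X : N₁ ⊗[K] N₂ →ₗ[K] N₁ ⊗[K] N₂)
    (hX : X = TensorProduct.map X₁ LinearMap.id + TensorProduct.map σ X₂) :
    ∃ Φ : (DS X₁ ⊗[K] DS X₂) ≃ₗ[K] DS X,
      ∀ (v : N₁) (w : N₂) (hv : v ∈ LinearMap.ker X₁) (hw : w ∈ LinearMap.ker X₂)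
        (hvw : v ⊗ₜ[K] w ∈ LinearMap.ker X),
        Φ (Submodule.Quotient.mk (⟨v, hv⟩ : LinearMap.ker X₁) ⊗ₜ[K]
            Submodule.Quotient.mk (⟨w, hw⟩ : LinearMap.ker X₂)) =
          Submodule.Quotient.mk (⟨v ⊗ₜ[K] w, hvw⟩ : LinearMap.ker X) := by
  have hσσ' : ∀ v, σ (σ v) = v := fun v => by
    have := LinearMap.congr_fun hσ v; simpa using this
  have hσX' : ∀ v, σ (X₁ v) = -(X₁ (σ v)) := fun v => by
    have := LinearMap.congr_fun hσX v; simpa using this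
  have hXσ' : ∀ v, X₁ (σ v) = -(σ (X₁ v)) := fun v => by rw [hσX', neg_neg]
  have h1' : ∀ v, X₁ (X₁ v) = 0 := fun v => by
    have := LinearMap.congr_fun h1 v; simpa using this
  have h2' : ∀ w, X₂ (X₂ w) = 0 := fun w => by
    have := LinearMap.congr_fun h2 w; simpa using this
  have hXtmul : ∀ (u : N₁) (w : N₂), X (u ⊗ₜ[K] w) = X₁ u ⊗ₜ[K] w + σ u ⊗ₜ[K] X₂ w := by
    intro u w; rw [hX]; simp
  obtain ⟨p₂, hh₂, hhh₂, hXp₂, hp₂X⟩ := exists_homotopy X₂ h2'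
  by_cases hchar : (2 : K) = 0
  · -- characteristic two: untwist σ into X₁
    set Y := σ ∘ₗ X₁ with hYdef
    have hYv : ∀ v, Y v = σ (X₁ v) := fun v => rfl
    have hneg : ∀ {V : Type} [AddCommGroup V] [Module K V] (a : V), -a = a := by
      intro V _ _ a
      have : a + a = 0 := by rw [← two_smul K a, hchar, zero_smul]
      exact neg_eq_of_add_eq_zero_left this
    have hYX₁σ : ∀ v, Y v = X₁ (σ v) := fun v => by
      rw [hYv, hσX', hneg]
    have hYY : ∀ v, Y (Y v) = 0 := fun v => by
      rw [hYv (Y v), hYX₁σ v, h1', map_zero]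
    obtain ⟨p₁, hh₁, hhh₁, hYp₁, hp₁Y⟩ := exists_homotopy Y hYY
    have hXp₁ : ∀ v, X₁ (p₁ v) = 0 := fun v => by
      have h0 : σ (X₁ (p₁ v)) = 0 := hYp₁ v
      have := congrArg σ h0
      rwa [hσσ', map_zero] at this
    have hp₁X : ∀ v, p₁ (X₁ v) = 0 := fun v => by
      have e : X₁ v = Y (σ v) := by rw [hYX₁σ (σ v), hσσ']
      rw [e]; exact hp₁Y (σ v)
    have hb₁ : ∀ v, X₁ v = 0 → v - p₁ v ∈ LinearMap.range X₁ := by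
      intro v hv
      have hYv0 : Y v = 0 := by rw [hYv, hv, map_zero]
      have := hhh₁ v
      rw [hYv0, map_zero, add_zero] at this
      exact ⟨σ (hh₁ v), by rw [← hYX₁σ (hh₁ v)]; exact this⟩
    have hb₂ : ∀ w, X₂ w = 0 → w - p₂ w ∈ LinearMap.range X₂ := by
      intro w hw
      have := hhh₂ w
      rw [hw, map_zero, add_zero] at this
      exact ⟨hh₂ w, this⟩
    -- the untwisted operator and homotopy on the tensor product
    set S : N₁ ⊗[K] N₂ →ₗ[K] N₁ ⊗[K] N₂ := TensorProduct.map σ LinearMap.id with hSdef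
    set Z : N₁ ⊗[K] N₂ →ₗ[K] N₁ ⊗[K] N₂ :=
      TensorProduct.map Y LinearMap.id + TensorProduct.map LinearMap.id X₂ with hZdef
    set H : N₁ ⊗[K] N₂ →ₗ[K] N₁ ⊗[K] N₂ :=
      TensorProduct.map hh₁ LinearMap.id + TensorProduct.map p₁ hh₂ with hHdef
    have hZ1 : ∀ z, X (S z) = Z z := by
      intro z
      induction z using TensorProduct.induction_on with
      | zero => simp
      | tmul u w =>
          have lhs : X (S (u ⊗ₜ[K] w)) = X₁ (σ u) ⊗ₜ[K] w + u ⊗ₜ[K] X₂ w := by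
            rw [hSdef]
            simp only [TensorProduct.map_tmul, LinearMap.id_apply]
            rw [hXtmul, hσσ']
          have rhs : Z (u ⊗ₜ[K] w) = Y u ⊗ₜ[K] w + u ⊗ₜ[K] X₂ w := by
            rw [hZdef]
            simp only [LinearMap.add_apply, TensorProduct.map_tmul, LinearMap.id_apply]
          rw [lhs, rhs, hYX₁σ u]
      | add a b ha hb => rw [map_add, map_add, map_add, ha, hb]
    have hZ2 : ∀ z, S (X z) = Z z := by
      intro z
      induction z using TensorProduct.induction_on with
      | zero => simp
      | tmul u w =>
          rw [hXtmul]
          simp only [map_add, hSdef, TensorProduct.map_tmul, LinearMap.id_apply, hZdef,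
            LinearMap.add_apply]
          rw [hσσ', hYv u]
      | add a b ha hb => rw [map_add, map_add, map_add, ha, hb]
    have hcomp : ∀ z, Z (H z) + H (Z z) = z - TensorProduct.map p₁ p₂ z := by
      intro z
      induction z using TensorProduct.induction_on with
      | zero => simp
      | tmul u w =>
          have e1 : Y (hh₁ u) = u - p₁ u - hh₁ (Y u) := by rw [← hhh₁ u]; abel
          have e2 : X₂ (hh₂ w) = w - p₂ w - hh₂ (X₂ w) := by rw [← hhh₂ w]; abel
          have main : Z (H (u ⊗ₜ[K] w)) + H (Z (u ⊗ₜ[K] w)) =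
              (Y (hh₁ u) + hh₁ (Y u)) ⊗ₜ[K] w + (2 : K) • (hh₁ u ⊗ₜ[K] X₂ w) +
                p₁ u ⊗ₜ[K] (X₂ (hh₂ w) + hh₂ (X₂ w)) := by
            simp only [hZdef, hHdef, LinearMap.add_apply, TensorProduct.map_tmul,
              LinearMap.id_apply, map_add, hYp₁ u, hp₁Y u, zero_tmul, tmul_zero,
              add_zero, zero_add]
            rw [two_smul]
            simp only [add_tmul, tmul_add]
            abel
          rw [main, hchar, zero_smul, add_zero, hhh₁ u, hhh₂ w, TensorProduct.map_tmul]
          simp only [sub_tmul, tmul_sub]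
          abel
      | add a b ha hb =>
          simp only [map_add]
          rw [show Z (H a) + Z (H b) + (H (Z a) + H (Z b)) =
            (Z (H a) + H (Z a)) + (Z (H b) + H (Z b)) by abel, ha, hb]
          abel
    have hc : ∀ z, X z = 0 → z - TensorProduct.map p₁ p₂ z ∈ LinearMap.range X := by
      intro z hz
      have hZz : Z z = 0 := by rw [← hZ2 z, hz, map_zero]
      have := hcomp z
      rw [hZz, map_zero, add_zero] at this
      exact ⟨S (H z), by rw [hZ1 (H z)]; exact this⟩
    exact key X₁ X₂ σ hσσ' hσX' X hX p₁ p₂ hXp₁ hp₁X hXp₂ hp₂X hb₁ hb₂ hc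
  · -- characteristic not two: σ-equivariant homotopy data
    obtain ⟨p₁, hh₁, hhh₁, hXp₁, hp₁X, hσp₁, hσh₁⟩ :=
      exists_homotopy_equiv X₁ σ h1' hσσ' hσX' hchar
    have hb₁ : ∀ v, X₁ v = 0 → v - p₁ v ∈ LinearMap.range X₁ := by
      intro v hv
      have := hhh₁ v
      rw [hv, map_zero, add_zero] at this
      exact ⟨hh₁ v, this⟩
    have hb₂ : ∀ w, X₂ w = 0 → w - p₂ w ∈ LinearMap.range X₂ := by
      intro w hw
      have := hhh₂ w
      rw [hw, map_zero, add_zero] at this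
      exact ⟨hh₂ w, this⟩
    set H : N₁ ⊗[K] N₂ →ₗ[K] N₁ ⊗[K] N₂ :=
      TensorProduct.map hh₁ LinearMap.id + TensorProduct.map (p₁ ∘ₗ σ) hh₂ with hHdef
    have hcomp : ∀ z, X (H z) + H (X z) = z - TensorProduct.map p₁ p₂ z := by
      intro z
      induction z using TensorProduct.induction_on with
      | zero => simp
      | tmul u w =>
          have eXH : X (H (u ⊗ₜ[K] w)) =
              X₁ (hh₁ u) ⊗ₜ[K] w + σ (hh₁ u) ⊗ₜ[K] X₂ w +
                (X₁ (p₁ (σ u)) ⊗ₜ[K] hh₂ w + σ (p₁ (σ u)) ⊗ₜ[K] X₂ (hh₂ w)) := by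
            rw [hHdef]
            simp only [LinearMap.add_apply, TensorProduct.map_tmul, LinearMap.id_apply,
              LinearMap.comp_apply, map_add, hXtmul]
          have eHX : H (X (u ⊗ₜ[K] w)) =
              hh₁ (X₁ u) ⊗ₜ[K] w + p₁ (σ (X₁ u)) ⊗ₜ[K] hh₂ w +
                (hh₁ (σ u) ⊗ₜ[K] X₂ w + p₁ (σ (σ u)) ⊗ₜ[K] hh₂ (X₂ w)) := by
            rw [hXtmul, map_add, hHdef]
            simp only [LinearMap.add_apply, TensorProduct.map_tmul, LinearMap.id_apply,
              LinearMap.comp_apply]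
          have z1 : X₁ (p₁ (σ u)) = 0 := hXp₁ (σ u)
          have z2 : σ (p₁ (σ u)) = p₁ u := by rw [hσp₁, hσσ']
          have z3 : σ (hh₁ u) = -(hh₁ (σ u)) := hσh₁ u
          have z4 : p₁ (σ (X₁ u)) = 0 := by
            rw [hσX', map_neg, hp₁X, neg_zero]
          have z5 : σ (σ u) = u := hσσ' u
          have e1 : X₁ (hh₁ u) = u - p₁ u - hh₁ (X₁ u) := by rw [← hhh₁ u]; abel
          have e2 : X₂ (hh₂ w) = w - p₂ w - hh₂ (X₂ w) := by rw [← hhh₂ w]; abel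
          rw [eXH, eHX, z1, z2, z3, z4, z5, e1, e2, TensorProduct.map_tmul]
          simp only [zero_tmul, tmul_zero, sub_tmul, tmul_sub, neg_tmul, add_zero, zero_add]
          abel
      | add a b ha hb =>
          simp only [map_add]
          rw [show X (H a) + X (H b) + (H (X a) + H (X b)) =
            (X (H a) + H (X a)) + (X (H b) + H (X b)) by abel, ha, hb]
          abel
    have hc : ∀ z, X z = 0 → z - TensorProduct.map p₁ p₂ z ∈ LinearMap.range X := by
      intro z hz
      have := hcomp z
      rw [hz, map_zero, add_zero] at this
      exact ⟨H z, this⟩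
    exact key X₁ X₂ σ hσσ' hσX' X hX p₁ p₂ hXp₁ hp₁X hXp₂ hp₂X hb₁ hb₂ hc
end
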